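/- Let d ≥ 1 and ε > 0. The regularization ρ_ε : ℝ^d → ℝ is differentiable at every point, and its gradient α_ε(z) = ∇ρ_ε(z) satisfies ‖α_ε(z)‖ ≤ 1 for every z ∈ ℝ^d. -/

import Mathlib

open scoped RealInnerProductSpace

noncomputable def rhoEps (d : ℕ) (ε : ℝ) (z : EuclideanSpace ℝ (Fin d)) : ℝ :=
  if ε ≤ ‖z‖ then ‖z‖ - (1 - 2 / Real.pi) * ε
  else (2 * ε / Real.pi) * (1 - Real.cos (Real.pi * ‖z‖ / (2 * ε)))

noncomputable def fAux (ε r : ℝ) : ℝ :=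
  if ε ≤ r then r - (1 - 2 / Real.pi) * ε
  else (2 * ε / Real.pi) * (1 - Real.cos (Real.pi * r / (2 * ε)))

lemma fAux_hasDerivAt {ε : ℝ} (hε : 0 < ε) (r : ℝ) :
    HasDerivAt (fAux ε) (Real.sin (Real.pi * min r ε / (2 * ε))) r := by
  have hπ : Real.pi ≠ 0 := Real.pi_ne_zero
  have hε' : ε ≠ 0 := hε.ne'
  have key : Real.pi * ε / (2 * ε) = Real.pi / 2 := by field_simp
  have hf1 : ∀ s : ℝ, HasDerivAt (fun r : ℝ => r - (1 - 2 / Real.pi) * ε) 1 s :=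
    fun s => (hasDerivAt_id s).sub_const _
  have hf2 : ∀ s : ℝ, HasDerivAt
      (fun r : ℝ => (2 * ε / Real.pi) * (1 - Real.cos (Real.pi * r / (2 * ε))))
      (Real.sin (Real.pi * s / (2 * ε))) s := by
    intro s
    have h1 : HasDerivAt (fun r : ℝ => Real.pi * r / (2 * ε)) (Real.pi / (2 * ε)) s := by
      simpa using ((hasDerivAt_id s).const_mul Real.pi).div_const (2 * ε)
    have h2 := (Real.hasDerivAt_cos (Real.pi * s / (2 * ε))).comp s h1
    have h3 := ((hasDerivAt_const s (1 : ℝ)).sub h2).const_mul (2 * ε / Real.pi)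
    have h4 : 2 * ε / Real.pi * (0 - -Real.sin (Real.pi * s / (2 * ε)) * (Real.pi / (2 * ε)))
        = Real.sin (Real.pi * s / (2 * ε)) := by field_simp; ring
    rw [h4] at h3
    simpa [Function.comp] using h3
  rcases lt_trichotomy r ε with h | h | h
  · rw [min_eq_left h.le]
    refine (hf2 r).congr_of_eventuallyEq ?_
    filter_upwards [Iio_mem_nhds h] with s hs
    simp [fAux, not_le.mpr (Set.mem_Iio.mp hs)]
  · subst h
    rw [min_self]
    have hs1 : Real.sin (Real.pi * r / (2 * r)) = 1 := by
      rw [key, Real.sin_pi_div_two]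
    rw [hs1]
    have hval : fAux r r = (2 * r / Real.pi) * (1 - Real.cos (Real.pi * r / (2 * r))) := by
      simp only [fAux, if_pos le_rfl, key, Real.cos_pi_div_two]
      field_simp; ring
    have hIci : HasDerivWithinAt (fAux r) 1 (Set.Ici r) r := by
      refine ((hf1 r).hasDerivWithinAt (s := Set.Ici r)).congr ?_ ?_
      · intro x hx; simp [fAux, if_pos (Set.mem_Ici.mp hx)]
      · simp [fAux, if_pos le_rfl]
    have hIic : HasDerivWithinAt (fAux r) 1 (Set.Iic r) r := by
      have h0 := (hf2 r).hasDerivWithinAt (s := Set.Iic r)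
      rw [hs1] at h0
      refine h0.congr ?_ ?_
      · intro x hx
        rcases eq_or_lt_of_le (Set.mem_Iic.mp hx) with rfl | hx'
        · exact hval
        · simp [fAux, not_le.mpr hx']
      · exact hval
    have hu := hIic.union hIci
    rw [Set.Iic_union_Ici] at hu
    exact hasDerivWithinAt_univ.mp hu
  · rw [min_eq_right h.le]
    have hs1 : Real.sin (Real.pi * ε / (2 * ε)) = 1 := by
      rw [key, Real.sin_pi_div_two]
    rw [hs1]
    refine (hf1 r).congr_of_eventuallyEq ?_
    filter_upwards [Ioi_mem_nhds h] with s hs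
    simp [fAux, if_pos (le_of_lt (show ε < s from hs))]

lemma fAux_lipschitz {ε : ℝ} (hε : 0 < ε) : LipschitzWith 1 (fAux ε) := by
  apply lipschitzWith_of_nnnorm_deriv_le (fun r => (fAux_hasDerivAt hε r).differentiableAt)
  intro r
  rw [(fAux_hasDerivAt hε r).deriv, ← NNReal.coe_le_coe, coe_nnnorm, Real.norm_eq_abs]
  simpa using Real.abs_sin_le_one _

/-- `ρ_ε` is differentiable everywhere and its gradient
`α_ε(z) = ∇ρ_ε(z)` satisfies `‖α_ε(z)‖ ≤ 1` for every `z`. -/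
theorem rhoEps_grad_norm_le_one (d : ℕ) (hd : 1 ≤ d) (ε : ℝ) (hε : 0 < ε)
    (z : EuclideanSpace ℝ (Fin d)) :
    DifferentiableAt ℝ (rhoEps d ε) z ∧ ‖gradient (rhoEps d ε) z‖ ≤ 1 := by
  have hπ : (0:ℝ) < Real.pi := Real.pi_pos
  have hlip : LipschitzWith 1 (rhoEps d ε) := by
    have heq : rhoEps d ε = (fAux ε) ∘ (fun z : EuclideanSpace ℝ (Fin d) => ‖z‖) := rfl
    rw [heq]
    simpa using (fAux_lipschitz hε).comp lipschitzWith_one_norm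
  have hdiff : DifferentiableAt ℝ (rhoEps d ε) z := by
    rcases eq_or_ne z 0 with rfl | hz
    · have h0 : HasFDerivAt (rhoEps d ε) (0 : EuclideanSpace ℝ (Fin d) →L[ℝ] ℝ) 0 := by
        rw [hasFDerivAt_iff_isLittleO_nhds_zero, Asymptotics.isLittleO_iff]
        intro c hc
        have hδ : (0:ℝ) < min ε (4 * ε * c / Real.pi) := by positivity
        filter_upwards [Metric.ball_mem_nhds (0 : EuclideanSpace ℝ (Fin d)) hδ] with w hw
        rw [Metric.mem_ball, dist_zero_right] at hw
        have hw1 : ‖w‖ < ε := lt_of_lt_of_le hw (min_le_left _ _)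
        have hw2 : ‖w‖ ≤ 4 * ε * c / Real.pi := le_of_lt (lt_of_lt_of_le hw (min_le_right _ _))
        have hρ0 : rhoEps d ε 0 = 0 := by
          simp [rhoEps, not_le.mpr hε]
        have hρw : rhoEps d ε w
            = 2 * ε / Real.pi * (1 - Real.cos (Real.pi * ‖w‖ / (2 * ε))) := by
          simp [rhoEps, not_le.mpr hw1]
        simp only [zero_add, ContinuousLinearMap.zero_apply, sub_zero, hρ0, hρw]
        rw [Real.norm_eq_abs, abs_of_nonneg (by
          apply mul_nonneg (by positivity)
          linarith [Real.cos_le_one (Real.pi * ‖w‖ / (2 * ε))])]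
        have hcos : 1 - Real.cos (Real.pi * ‖w‖ / (2 * ε))
            ≤ (Real.pi * ‖w‖ / (2 * ε)) ^ 2 / 2 := by
          linarith [Real.one_sub_sq_div_two_le_cos (x := Real.pi * ‖w‖ / (2 * ε))]
        have key : 2 * ε / Real.pi * ((Real.pi * ‖w‖ / (2 * ε)) ^ 2 / 2)
            = Real.pi * ‖w‖ ^ 2 / (4 * ε) := by
          field_simp; ring
        have h2 : Real.pi * ‖w‖ ^ 2 / (4 * ε) ≤ c * ‖w‖ := by
          rw [div_le_iff₀ (by positivity)]
          rw [le_div_iff₀ hπ] at hw2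
          nlinarith [norm_nonneg w]
        calc 2 * ε / Real.pi * (1 - Real.cos (Real.pi * ‖w‖ / (2 * ε)))
            ≤ 2 * ε / Real.pi * ((Real.pi * ‖w‖ / (2 * ε)) ^ 2 / 2) :=
              mul_le_mul_of_nonneg_left hcos (by positivity)
          _ = Real.pi * ‖w‖ ^ 2 / (4 * ε) := key
          _ ≤ c * ‖w‖ := h2
      exact h0.differentiableAt
    · exact DifferentiableAt.comp z (fAux_hasDerivAt hε ‖z‖).differentiableAt
        ((contDiffAt_norm ℝ (n := 1) hz).differentiableAt (by norm_num))
  refine ⟨hdiff, ?_⟩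
  have h1 : ‖gradient (rhoEps d ε) z‖ = ‖fderiv ℝ (rhoEps d ε) z‖ := by
    simp [gradient, LinearIsometryEquiv.norm_map]
  rw [h1]
  simpa using norm_fderiv_le_of_lipschitz ℝ hlip (x₀ := z)
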